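/- Let A be a real n×d matrix of full column rank, let p ≥ 2, and let w ∈ ℝ^n be a vector with strictly positive entries such that w_i ≥ σ(W^{1/2−1/p}A)_i for all i ∈ [n], where W = diag(w). Then for every x ∈ ℝ^d, ‖Ax‖_p ≤ ‖W^{1/2−1/p}Ax‖_2, i.e. (Σ_{i∈[n]} |(Ax)_i|^p)^{1/p} ≤ (Σ_{i∈[n]} w_i^{1−2/p}(Ax)_i^2)^{1/2}. -/

import Mathlib

open Matrix

/-- Leverage score of row `i` of matrix `M`: `σ(M)_i = m_i^⊤ (M^⊤ M)⁻¹ m_i`. -/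
noncomputable def levScore {n d : ℕ} (M : Matrix (Fin n) (Fin d) ℝ) (i : Fin n) : ℝ :=
  M i ⬝ᵥ ((Mᵀ * M)⁻¹ *ᵥ M i)

lemma aux_isUnit {d : ℕ} (G : Matrix (Fin d) (Fin d) ℝ) (h : G.rank = d) : IsUnit G := by
  have hker : LinearMap.ker G.mulVecLin = ⊥ := by
    have h1 := LinearMap.finrank_range_add_finrank_ker G.mulVecLin
    rw [Matrix.rank] at h
    rw [h] at h1
    have h2 : Module.finrank ℝ (Fin d → ℝ) = d := by simp
    rw [h2] at h1
    have : Module.finrank ℝ (LinearMap.ker G.mulVecLin) = 0 := by omega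
    exact Submodule.finrank_eq_zero.mp this
  rw [Matrix.isUnit_iff_isUnit_det, isUnit_iff_ne_zero]
  intro hdet
  obtain ⟨v, hv, hGv⟩ := (Matrix.exists_mulVec_eq_zero_iff).mpr hdet
  have : v ∈ LinearMap.ker G.mulVecLin := LinearMap.mem_ker.mpr (by simpa using hGv)
  rw [hker, Submodule.mem_bot] at this
  exact hv this

lemma aux_key {n d : ℕ} (B : Matrix (Fin n) (Fin d) ℝ) (hB : IsUnit (Bᵀ * B))
    (x : Fin d → ℝ) (i : Fin n) :
    ((B *ᵥ x) i) ^ 2 ≤ levScore B i * ∑ j, ((B *ᵥ x) j) ^ 2 := by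
  set G := Bᵀ * B with hG
  set a := G⁻¹ *ᵥ B i with ha
  have hGa : G *ᵥ a = B i := by
    rw [ha, Matrix.mulVec_mulVec,
      Matrix.mul_nonsing_inv _ ((Matrix.isUnit_iff_isUnit_det G).mp hB), Matrix.one_mulVec]
  have hGsymm : Gᵀ = G := by rw [hG, Matrix.transpose_mul, Matrix.transpose_transpose]
  have hdot : ∀ v : Fin d → ℝ, a ⬝ᵥ (G *ᵥ v) = (B *ᵥ a) ⬝ᵥ (B *ᵥ v) := by
    intro v
    rw [hG, ← Matrix.mulVec_mulVec, Matrix.dotProduct_mulVec a, Matrix.vecMul_transpose]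
  have hswap : ∀ v : Fin d → ℝ, a ⬝ᵥ (G *ᵥ v) = (B i) ⬝ᵥ v := by
    intro v
    rw [Matrix.dotProduct_mulVec a, ← hGsymm, Matrix.vecMul_transpose, hGa]
  have h1 : (B *ᵥ x) i = (B *ᵥ a) ⬝ᵥ (B *ᵥ x) := by
    rw [← hdot, hswap]; rfl
  have h2 : (B *ᵥ a) ⬝ᵥ (B *ᵥ a) = levScore B i := by
    rw [← hdot, hswap, levScore, ha, hG]
  rw [h1]
  have := Finset.sum_mul_sq_le_sq_mul_sq Finset.univ (fun j => (B *ᵥ a) j) (fun j => (B *ᵥ x) j)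
  calc ((B *ᵥ a) ⬝ᵥ (B *ᵥ x)) ^ 2
      = (∑ j, (B *ᵥ a) j * (B *ᵥ x) j) ^ 2 := rfl
    _ ≤ (∑ j, ((B *ᵥ a) j) ^ 2) * ∑ j, ((B *ᵥ x) j) ^ 2 := this
    _ = levScore B i * ∑ j, ((B *ᵥ x) j) ^ 2 := by
        rw [← h2]; congr 1; simp [dotProduct, sq]

theorem stmt0 {n d : ℕ} (A : Matrix (Fin n) (Fin d) ℝ) (hA : A.rank = d)
    (p : ℝ) (hp : 2 ≤ p) (w : Fin n → ℝ) (hw : ∀ i, 0 < w i)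
    (hσ : ∀ i, levScore (Matrix.diagonal (fun j => w j ^ ((1:ℝ)/2 - 1/p)) * A) i ≤ w i)
    (x : Fin d → ℝ) :
    (∑ i, |(A *ᵥ x) i| ^ p) ^ (1/p) ≤
      (∑ i, w i ^ (1 - 2/p) * ((A *ᵥ x) i) ^ 2) ^ ((1:ℝ)/2) := by
  have hp0 : (0:ℝ) < p := by linarith
  set c : Fin n → ℝ := fun j => w j ^ ((1:ℝ)/2 - 1/p) with hc
  have hcpos : ∀ j, 0 < c j := fun j => Real.rpow_pos_of_pos (hw j) _
  set B : Matrix (Fin n) (Fin d) ℝ := Matrix.diagonal c * A with hB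
  -- rank of B
  have hdet : IsUnit (Matrix.diagonal c).det := by
    rw [Matrix.det_diagonal]
    exact isUnit_iff_ne_zero.mpr (Finset.prod_ne_zero_iff.mpr fun j _ => (hcpos j).ne')
  have hrankB : B.rank = d := by
    rw [hB, Matrix.rank_mul_eq_right_of_isUnit_det _ _ hdet, hA]
  have hUnit : IsUnit (Bᵀ * B) := aux_isUnit _ (by rw [Matrix.rank_transpose_mul_self, hrankB])
  set y : Fin n → ℝ := A *ᵥ x with hy
  set z : Fin n → ℝ := B *ᵥ x with hz
  have hzy : ∀ i, z i = c i * y i := by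
    intro i
    rw [hz, hB, ← Matrix.mulVec_mulVec, Matrix.mulVec_diagonal]
  set S : ℝ := ∑ j, (z j) ^ 2 with hS
  have hS0 : 0 ≤ S := Finset.sum_nonneg fun j _ => sq_nonneg _
  -- key bound
  have hkey : ∀ i, (z i) ^ 2 ≤ w i * S := fun i =>
    (aux_key B hUnit x i).trans
      (mul_le_mul_of_nonneg_right (hσ i) hS0)
  -- RHS = S ^ (1/2)
  have hRHS : ∑ i, w i ^ (1 - 2/p) * (y i) ^ 2 = S := by
    refine Finset.sum_congr rfl fun i _ => ?_
    rw [hzy i, mul_pow, hc]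
    congr 1
    rw [← Real.rpow_natCast (w i ^ ((1:ℝ)/2 - 1/p)) 2, ← Real.rpow_mul (hw i).le]
    norm_num
    ring_nf
  -- pointwise bound on |y i|
  have hyb : ∀ i, |y i| ≤ w i ^ (1/p) * S ^ ((1:ℝ)/2) := by
    intro i
    have h1 : |z i| ≤ (w i) ^ ((1:ℝ)/2) * S ^ ((1:ℝ)/2) := by
      have := Real.sqrt_le_sqrt (hkey i)
      rw [Real.sqrt_sq_eq_abs, Real.sqrt_mul (hw i).le, Real.sqrt_eq_rpow, Real.sqrt_eq_rpow] at this
      exact this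
    have h2 : |z i| * (w i) ^ ((1:ℝ)/p - 1/2) = |y i| := by
      simp only [hzy i, abs_mul, abs_of_pos (hcpos i), hc]
      rw [abs_of_pos (Real.rpow_pos_of_pos (hw i) _), mul_right_comm, ← Real.rpow_add (hw i),
        show (1:ℝ)/2 - 1/p + (1/p - 1/2) = 0 by ring, Real.rpow_zero, one_mul]
    rw [← h2]
    calc |z i| * (w i) ^ ((1:ℝ)/p - 1/2)
        ≤ ((w i) ^ ((1:ℝ)/2) * S ^ ((1:ℝ)/2)) * (w i) ^ ((1:ℝ)/p - 1/2) :=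
          mul_le_mul_of_nonneg_right h1 (Real.rpow_nonneg (hw i).le _)
      _ = w i ^ (1/p) * S ^ ((1:ℝ)/2) := by
          rw [mul_right_comm, ← Real.rpow_add (hw i)]
          ring_nf
  -- main pointwise estimate
  have hmain : ∀ i, |y i| ^ p ≤ S ^ ((p-2)/2) * (z i) ^ 2 := by
    intro i
    have e1 : |y i| ^ p = |y i| ^ (p - 2) * |y i| ^ (2:ℝ) := by
      rw [← Real.rpow_add' (abs_nonneg _) (by norm_num; linarith)]
      norm_num
    rw [e1]
    have h3 : |y i| ^ (p-2) ≤ (w i ^ (1/p) * S ^ ((1:ℝ)/2)) ^ (p-2) :=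
      Real.rpow_le_rpow (abs_nonneg _) (hyb i) (by linarith)
    have h4 : |y i| ^ (2:ℝ) = (y i)^2 := by
      rw [show (2:ℝ) = ((2:ℕ):ℝ) by norm_num, Real.rpow_natCast, sq_abs]
    have h5 : (z i)^2 * (w i) ^ ((2:ℝ)/p - 1) = (y i)^2 := by
      simp only [hzy i, hc, mul_pow]
      rw [← Real.rpow_natCast (w i ^ ((1:ℝ)/2 - 1/p)) 2, ← Real.rpow_mul (hw i).le,
        mul_assoc, mul_comm ((y i)^2), ← mul_assoc, ← Real.rpow_add (hw i),
        show ((1:ℝ)/2 - 1/p) * ((2:ℕ):ℝ) + ((2:ℝ)/p - 1) = 0 by push_cast; ring,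
        Real.rpow_zero, one_mul]
    rw [h4, ← h5]
    calc |y i| ^ (p-2) * ((z i)^2 * (w i) ^ ((2:ℝ)/p - 1))
        ≤ (w i ^ (1/p) * S ^ ((1:ℝ)/2)) ^ (p-2) * ((z i)^2 * (w i) ^ ((2:ℝ)/p - 1)) := by
          exact mul_le_mul_of_nonneg_right h3
            (mul_nonneg (sq_nonneg _) (Real.rpow_nonneg (hw i).le _))
      _ = S ^ ((p-2)/2) * (z i)^2 := by
          rw [Real.mul_rpow (Real.rpow_nonneg (hw i).le _) (Real.rpow_nonneg hS0 _),
            ← Real.rpow_mul (hw i).le, ← Real.rpow_mul hS0]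
          have : w i ^ (1/p * (p-2)) * S ^ ((1:ℝ)/2 * (p-2)) * ((z i)^2 * w i ^ ((2:ℝ)/p - 1))
              = (w i ^ (1/p * (p-2)) * w i ^ ((2:ℝ)/p - 1)) * (S ^ ((1:ℝ)/2 * (p-2)) * (z i)^2) := by ring
          rw [this, ← Real.rpow_add (hw i)]
          have he : 1/p * (p-2) + ((2:ℝ)/p - 1) = 0 := by field_simp; ring
          rw [he, Real.rpow_zero, one_mul]
          ring_nf
  -- sum up
  have hsum : ∑ i, |y i| ^ p ≤ S ^ (p/2) := by
    calc ∑ i, |y i| ^ p ≤ ∑ i, S ^ ((p-2)/2) * (z i) ^ 2 :=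
          Finset.sum_le_sum fun i _ => hmain i
      _ = S ^ ((p-2)/2) * S := by rw [← Finset.mul_sum]
      _ = S ^ (p/2) := by
          rw [show p/2 = (p-2)/2 + 1 by ring,
            Real.rpow_add' hS0 (by intro h; rw [show (p-2)/2 + 1 = p/2 by ring] at h; exact (by positivity : (0:ℝ) < p/2).ne' h), Real.rpow_one]
  calc (∑ i, |y i| ^ p) ^ (1/p)
      ≤ (S ^ (p/2)) ^ (1/p) :=
        Real.rpow_le_rpow (Finset.sum_nonneg fun i _ => Real.rpow_nonneg (abs_nonneg _) _) hsum (by positivity)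
    _ = S ^ ((1:ℝ)/2) := by
        rw [← Real.rpow_mul hS0]
        congr 1
        field_simp
    _ = (∑ i, w i ^ (1 - 2/p) * (y i) ^ 2) ^ ((1:ℝ)/2) := by rw [hRHS]
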